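/- No injective numbering of the partial computable functions is precomplete: if γ : ℕ → P is an injective surjection onto the set P of all unary partial computable functions, then there exists a partial computable function ψ : ℕ ⇀ ℕ such that no total computable f : ℕ → ℕ satisfies γ(f(n)) = γ(ψ(n)) for every n with ψ(n) defined. -/

import Mathlib

/-- No injective (1-1) numbering of the partial computable functions is
precomplete: for every injective surjection `γ` from `ℕ` onto the partial
computable functions there is a partial computable `ψ` that is not totalized
modulo `γ` by any total computable function. -/
theorem one_one_numbering_not_precomplete
    (γ : ℕ → {ψ : ℕ →. ℕ // Nat.Partrec ψ})
    (hinj : Function.Injective γ) (hsurj : Function.Surjective γ) :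
    ∃ ψ : ℕ →. ℕ, Nat.Partrec ψ ∧
      ∀ f : ℕ → ℕ, Computable f →
        ¬ ∀ n : ℕ, ∀ m ∈ ψ n, γ (f n) = γ m := by
  refine ⟨fun n => (Nat.Partrec.Code.eval (Denumerable.ofNat Nat.Partrec.Code n) n).map
    Nat.succ, ?_, ?_⟩
  · refine Partrec.nat_iff.mp ?_
    exact Partrec.map
      ((Nat.Partrec.Code.eval_part.comp (Computable.ofNat _) Computable.id))
      (Computable.succ.comp Computable.snd).to₂
  · intro f hf hall
    -- f extends ψ; get a code for f
    obtain ⟨c, hc⟩ := Nat.Partrec.Code.exists_code.mp (Partrec.nat_iff.mp hf.partrec)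
    set e := Encodable.encode c with he
    have hce : (Denumerable.ofNat Nat.Partrec.Code e : Nat.Partrec.Code) = c := by
      simp [he]
    have hmem : f e + 1 ∈ (Nat.Partrec.Code.eval
        (Denumerable.ofNat Nat.Partrec.Code e) e).map Nat.succ := by
      rw [hce, hc]
      exact Part.mem_map Nat.succ (Part.mem_some (f e))
    have := hinj (hall e (f e + 1) hmem)
    omega
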